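/- The 91 triangular lattice points of a regular hexagon of side length 5 form a 34-distance set, and its largest squared distance, 100, is not among the 34 smallest positive Löschian numbers. -/

import Mathlib

set_option maxRecDepth 40000

/-- Triangular lattice point a•(1,0) + b•(1/2, √3/2). -/
noncomputable def tri (a b : ℤ) : ℝ × ℝ :=
  ((a : ℝ) + (b : ℝ) / 2, (b : ℝ) * Real.sqrt 3 / 2)

/-- Squared Euclidean distance in the plane. -/
def sqd (p q : ℝ × ℝ) : ℝ := (p.1 - q.1) ^ 2 + (p.2 - q.2) ^ 2

/-- The triangular lattice. -/
noncomputable def triLattice : Set (ℝ × ℝ) := {p | ∃ a b : ℤ, p = tri a b}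

/-- Closed regular hexagon of side `k` centered at the origin with a vertex at `(k,0)`. -/
noncomputable def hexR (k : ℤ) : Set (ℝ × ℝ) :=
  convexHull ℝ ({tri k 0, tri 0 k, tri (-k) k, tri (-k) 0, tri 0 (-k), tri k (-k)} : Set (ℝ × ℝ))

/-- Closed (k, k+1)-equiangular hexagon with vertices at lattice points. -/
noncomputable def hexE (k : ℤ) : Set (ℝ × ℝ) :=
  convexHull ℝ ({tri k 0, tri k (k+1), tri 0 (2*k+1), tri (-(k+1)) (2*k+1),
    tri (-(k+1)) (k+1), tri 0 0} : Set (ℝ × ℝ))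

/-- Set of squared distances between distinct points of `X`. -/
def sqdSet (X : Set (ℝ × ℝ)) : Set ℝ := {d | ∃ p ∈ X, ∃ q ∈ X, p ≠ q ∧ d = sqd p q}

/-! ### Auxiliary definitions -/

/-- The lattice-coordinate shear map. -/
noncomputable def Lmap : (ℝ × ℝ) →ₗ[ℝ] (ℝ × ℝ) where
  toFun p := (p.1 + p.2 / 2, p.2 * Real.sqrt 3 / 2)
  map_add' p q := by simp [Prod.ext_iff]; constructor <;> ring
  map_smul' c p := by simp [Prod.ext_iff]; constructor <;> ring

/-- Hexagon vertices in lattice coordinates. -/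
def Hq : Set (ℝ × ℝ) := {(5, 0), (0, 5), (-5, 5), (-5, 0), (0, -5), (5, -5)}

/-- Lattice coordinate pairs of points in the hexagon. -/
noncomputable def S : Finset (ℤ × ℤ) :=
  (Finset.Icc ((-5 : ℤ), (-5 : ℤ)) (5, 5)).filter fun p => -5 ≤ p.1 + p.2 ∧ p.1 + p.2 ≤ 5

/-- The 34 squared distances. -/
def D : Finset ℤ := {1, 3, 4, 7, 9, 12, 13, 16, 19, 21, 25, 27, 28, 31, 36, 37, 39, 43, 48, 49,
  52, 57, 61, 63, 64, 67, 73, 75, 76, 79, 81, 84, 91, 100}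

/-- Witness pairs realizing each squared distance. -/
def W : Finset ((ℤ × ℤ) × (ℤ × ℤ)) :=
  { ((-5,0),(-5,1)), ((-5,0),(-4,1)), ((-5,0),(-5,2)), ((-5,0),(-4,2)), ((-5,0),(-5,3)),
    ((-5,0),(-3,2)), ((-5,0),(-4,3)), ((-5,0),(-5,4)), ((-5,0),(-3,3)), ((-5,0),(-4,4)),
    ((-5,0),(-5,5)), ((-5,0),(-2,3)), ((-5,0),(-3,4)), ((-5,0),(-4,5)), ((-5,0),(1,0)),
    ((-5,0),(-2,4)), ((-5,0),(-3,5)), ((-5,0),(1,1)), ((-5,0),(-1,4)), ((-5,0),(-2,5)),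
    ((-5,0),(1,2)), ((-5,0),(2,1)), ((-5,0),(-1,5)), ((-5,0),(1,3)), ((-5,0),(3,0)),
    ((-5,0),(2,2)), ((-5,0),(3,1)), ((-5,0),(0,5)), ((-5,0),(1,4)), ((-5,0),(2,3)),
    ((-5,0),(4,0)), ((-5,0),(3,2)), ((-5,0),(4,1)), ((-5,0),(5,0)) }

noncomputable def trif (p : ℤ × ℤ) : ℝ × ℝ := tri p.1 p.2

lemma tri_eq_Lmap (a b : ℤ) : tri a b = Lmap ((a : ℝ), (b : ℝ)) := rfl

lemma sqrt3_pos : (0 : ℝ) < Real.sqrt 3 := Real.sqrt_pos.mpr (by norm_num)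

lemma Lmap_inj : Function.Injective Lmap := by
  intro p q h
  have h2 : p.2 * Real.sqrt 3 / 2 = q.2 * Real.sqrt 3 / 2 := congrArg Prod.snd h
  have hp2 : p.2 = q.2 := by
    have h3 := sqrt3_pos
    field_simp at h2
    exact h2
  have h1 : p.1 + p.2 / 2 = q.1 + q.2 / 2 := congrArg Prod.fst h
  have hp1 : p.1 = q.1 := by rw [hp2] at h1; linarith
  exact Prod.ext hp1 hp2

lemma trif_inj : Function.Injective trif := by
  intro p q h
  have h' : ((p.1 : ℝ), (p.2 : ℝ)) = ((q.1 : ℝ), (q.2 : ℝ)) :=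
    Lmap_inj (by simpa [trif, tri_eq_Lmap] using h)
  have h1 : (p.1 : ℝ) = q.1 := congrArg Prod.fst h'
  have h2 : (p.2 : ℝ) = q.2 := congrArg Prod.snd h'
  exact Prod.ext (by exact_mod_cast h1) (by exact_mod_cast h2)

lemma hexR5_eq : hexR 5 = Lmap '' convexHull ℝ Hq := by
  rw [LinearMap.image_convexHull]
  unfold hexR Hq
  congr 1
  simp only [Set.image_insert_eq, Set.image_singleton, tri_eq_Lmap]
  norm_num

lemma combo3 {s : Set (ℝ × ℝ)} (hs : Convex ℝ s) {A B C p : ℝ × ℝ} (hA : A ∈ s) (hB : B ∈ s)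
    (hC : C ∈ s) {a b c : ℝ} (ha : 0 ≤ a) (hb : 0 ≤ b) (hc : 0 ≤ c) (habc : a + b + c = 1)
    (hp : p = a • A + b • B + c • C) : p ∈ s := by
  subst hp
  have h := hs.sum_mem (t := (Finset.univ : Finset (Fin 3))) (w := ![a, b, c]) (z := ![A, B, C])
    (fun i _ => by fin_cases i <;> assumption)
    (by rw [Fin.sum_univ_three]; simpa using habc)
    (fun i _ => by fin_cases i <;> assumption)
  simpa [Fin.sum_univ_three] using h

lemma mem_hull {x y : ℝ} (hx1 : -5 ≤ x) (hx2 : x ≤ 5) (hy1 : -5 ≤ y) (hy2 : y ≤ 5)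
    (hs1 : -5 ≤ x + y) (hs2 : x + y ≤ 5) : ((x, y) : ℝ × ℝ) ∈ convexHull ℝ Hq := by
  have hc := convex_convexHull ℝ Hq
  have v1 : ((5 : ℝ), (0 : ℝ)) ∈ convexHull ℝ Hq := subset_convexHull ℝ Hq (by simp [Hq])
  have v2 : ((0 : ℝ), (5 : ℝ)) ∈ convexHull ℝ Hq := subset_convexHull ℝ Hq (by simp [Hq])
  have v3 : ((-5 : ℝ), (5 : ℝ)) ∈ convexHull ℝ Hq := subset_convexHull ℝ Hq (by simp [Hq])
  have v4 : ((-5 : ℝ), (0 : ℝ)) ∈ convexHull ℝ Hq := subset_convexHull ℝ Hq (by simp [Hq])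
  have v5 : ((0 : ℝ), (-5 : ℝ)) ∈ convexHull ℝ Hq := subset_convexHull ℝ Hq (by simp [Hq])
  have v6 : ((5 : ℝ), (-5 : ℝ)) ∈ convexHull ℝ Hq := subset_convexHull ℝ Hq (by simp [Hq])
  have hO : ((0 : ℝ), (0 : ℝ)) ∈ convexHull ℝ Hq := by
    refine combo3 hc v1 v4 v1 (by norm_num) (by norm_num) le_rfl
      (by norm_num : (1:ℝ)/2 + 1/2 + 0 = 1) ?_
    simp only [Prod.smul_mk, smul_eq_mul, Prod.mk_add_mk, Prod.mk.injEq]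
    norm_num
  rcases le_or_gt 0 y with hy | hy
  · rcases le_or_gt 0 x with hxp | hxn
    · refine combo3 hc v1 v2 hO (by linarith) (by linarith) (by linarith)
        (by ring : x/5 + y/5 + (1 - x/5 - y/5) = 1) ?_
      simp only [Prod.smul_mk, smul_eq_mul, Prod.mk_add_mk, Prod.mk.injEq]
      refine ⟨by ring, by ring⟩
    · rcases le_or_gt 0 (x + y) with hsp | hsn
      · refine combo3 hc v2 v3 hO (by linarith) (by linarith) (by linarith)
          (by ring : (x+y)/5 + (-x)/5 + (1 - y/5) = 1) ?_
        simp only [Prod.smul_mk, smul_eq_mul, Prod.mk_add_mk, Prod.mk.injEq]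
        refine ⟨by ring, by ring⟩
      · refine combo3 hc v3 v4 hO (by linarith) (by linarith) (by linarith)
          (by ring : y/5 + (-x-y)/5 + (1 + x/5) = 1) ?_
        simp only [Prod.smul_mk, smul_eq_mul, Prod.mk_add_mk, Prod.mk.injEq]
        refine ⟨by ring, by ring⟩
  · rcases le_or_gt 0 x with hxp | hxn
    · rcases le_or_gt 0 (x + y) with hsp | hsn
      · refine combo3 hc v6 v1 hO (by linarith) (by linarith) (by linarith)
          (by ring : (-y)/5 + (x+y)/5 + (1 - x/5) = 1) ?_
        simp only [Prod.smul_mk, smul_eq_mul, Prod.mk_add_mk, Prod.mk.injEq]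
        refine ⟨by ring, by ring⟩
      · refine combo3 hc v5 v6 hO (by linarith) (by linarith) (by linarith)
          (by ring : (-x-y)/5 + x/5 + (1 + y/5) = 1) ?_
        simp only [Prod.smul_mk, smul_eq_mul, Prod.mk_add_mk, Prod.mk.injEq]
        refine ⟨by ring, by ring⟩
    · refine combo3 hc v4 v5 hO (by linarith) (by linarith) (by linarith)
        (by ring : (-x)/5 + (-y)/5 + (1 + (x+y)/5) = 1) ?_
      simp only [Prod.smul_mk, smul_eq_mul, Prod.mk_add_mk, Prod.mk.injEq]
      refine ⟨by ring, by ring⟩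

/-- The hexagonal region in lattice coordinates. -/
def C : Set (ℝ × ℝ) :=
  {p | -5 ≤ p.1 ∧ p.1 ≤ 5 ∧ -5 ≤ p.2 ∧ p.2 ≤ 5 ∧ -5 ≤ p.1 + p.2 ∧ p.1 + p.2 ≤ 5}

lemma convex_C : Convex ℝ C := by
  rintro p ⟨h1, h2, h3, h4, h5, h6⟩ q ⟨g1, g2, g3, g4, g5, g6⟩ a b ha hb hab
  refine ⟨?_, ?_, ?_, ?_, ?_, ?_⟩ <;>
    simp only [Prod.fst_add, Prod.snd_add, Prod.smul_fst, Prod.smul_snd, smul_eq_mul] <;>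
    nlinarith

lemma hull_subset_C : convexHull ℝ Hq ⊆ C := by
  apply convexHull_min _ convex_C
  intro p hp
  simp only [Hq, Set.mem_insert_iff, Set.mem_singleton_iff] at hp
  rcases hp with rfl | rfl | rfl | rfl | rfl | rfl <;> norm_num [C]

lemma key : triLattice ∩ hexR 5 = trif '' ↑S := by
  ext p
  constructor
  · rintro ⟨⟨a, b, rfl⟩, hp⟩
    rw [hexR5_eq] at hp
    obtain ⟨q, hq, hLq⟩ := hp
    have hq' : q = ((a : ℝ), (b : ℝ)) := Lmap_inj (hLq.trans (tri_eq_Lmap a b))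
    subst hq'
    obtain ⟨h1, h2, h3, h4, h5, h6⟩ := hull_subset_C hq
    refine ⟨(a, b), ?_, rfl⟩
    simp only [S, Finset.mem_coe, Finset.mem_filter, Finset.mem_Icc, Prod.mk_le_mk]
    dsimp only at h1 h2 h3 h4 h5 h6
    refine ⟨⟨⟨by exact_mod_cast h1, by exact_mod_cast h3⟩, by exact_mod_cast h2,
      by exact_mod_cast h4⟩, by exact_mod_cast h5, by exact_mod_cast h6⟩
  · rintro ⟨⟨a, b⟩, hab, rfl⟩
    simp only [S, Finset.mem_coe, Finset.mem_filter, Finset.mem_Icc, Prod.mk_le_mk] at hab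
    obtain ⟨⟨⟨h1, h3⟩, h2, h4⟩, h5, h6⟩ := hab
    refine ⟨⟨a, b, rfl⟩, ?_⟩
    rw [hexR5_eq]
    refine ⟨((a : ℝ), (b : ℝ)), mem_hull ?_ ?_ ?_ ?_ ?_ ?_, (tri_eq_Lmap a b).symm⟩ <;>
      push_cast <;> [exact_mod_cast h1; exact_mod_cast h2; exact_mod_cast h3;
        exact_mod_cast h4; exact_mod_cast h5; exact_mod_cast h6]

lemma sqd_tri (a b c d : ℤ) :
    sqd (tri a b) (tri c d) = (((a - c) ^ 2 + (a - c) * (b - d) + (b - d) ^ 2 : ℤ) : ℝ) := by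
  have h3 : Real.sqrt 3 ^ 2 = 3 := Real.sq_sqrt (by norm_num)
  simp only [sqd, tri]
  push_cast
  nlinarith [h3]

lemma d_in_D : ∀ u ∈ Finset.Icc (-10 : ℤ) 10, ∀ v ∈ Finset.Icc (-10 : ℤ) 10,
    -10 ≤ u + v → u + v ≤ 10 → ¬(u = 0 ∧ v = 0) →
    u ^ 2 + u * v + v ^ 2 ∈ D := by decide

lemma W_props : ∀ pq ∈ W, pq.1 ∈ S ∧ pq.2 ∈ S ∧ pq.1 ≠ pq.2 := by decide

lemma W_covers : ∀ n ∈ D, ∃ pq ∈ W,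
    (pq.1.1 - pq.2.1) ^ 2 + (pq.1.1 - pq.2.1) * (pq.1.2 - pq.2.2) + (pq.1.2 - pq.2.2) ^ 2 = n := by
  decide

lemma sqdSet_eq : sqdSet (triLattice ∩ hexR 5) = (fun n : ℤ => (n : ℝ)) '' ↑D := by
  ext x
  constructor
  · rintro ⟨p, hp, q, hq, hne, rfl⟩
    rw [key] at hp hq
    obtain ⟨⟨a, b⟩, hab, rfl⟩ := hp
    obtain ⟨⟨c, d⟩, hcd, rfl⟩ := hq
    simp only [S, Finset.mem_coe, Finset.mem_filter, Finset.mem_Icc, Prod.mk_le_mk] at hab hcd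
    have hne' : ¬(a - c = 0 ∧ b - d = 0) := by
      rintro ⟨h1, h2⟩
      exact hne (by rw [show a = c by omega, show b = d by omega])
    refine ⟨(a - c) ^ 2 + (a - c) * (b - d) + (b - d) ^ 2, ?_, (sqd_tri a b c d).symm⟩
    exact Finset.mem_coe.mpr (d_in_D (a - c) (Finset.mem_Icc.mpr (by omega))
      (b - d) (Finset.mem_Icc.mpr (by omega)) (by omega) (by omega) hne')
  · rintro ⟨n, hn, rfl⟩
    obtain ⟨pq, hpq, hval⟩ := W_covers n (Finset.mem_coe.mp hn)
    obtain ⟨hp, hq, hne⟩ := W_props pq hpq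
    refine ⟨trif pq.1, ?_, trif pq.2, ?_, fun h => hne (trif_inj h), ?_⟩
    · rw [key]; exact ⟨pq.1, Finset.mem_coe.mpr hp, rfl⟩
    · rw [key]; exact ⟨pq.2, Finset.mem_coe.mpr hq, rfl⟩
    · rw [show trif pq.1 = tri pq.1.1 pq.1.2 from rfl, show trif pq.2 = tri pq.2.1 pq.2.2 from rfl,
        sqd_tri, hval]

/-- The 35 Löschian numbers below 100. -/
def T : Finset ℕ := {1, 3, 4, 7, 9, 12, 13, 16, 19, 21, 25, 27, 28, 31, 36, 37, 39, 43, 48, 49,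
  52, 57, 61, 63, 64, 67, 73, 75, 76, 79, 81, 84, 91, 93, 97}

lemma T_props : ∀ n ∈ T, 0 < n ∧ n < 100 ∧ ∃ a ∈ Finset.range 10, ∃ b ∈ Finset.range 10,
    n = a ^ 2 + a * b + b ^ 2 := by decide

theorem hexagon_side5_thirtyfour_distance :
    (triLattice ∩ hexR 5).ncard = 91 ∧
      (sqdSet (triLattice ∩ hexR 5)).ncard = 34 ∧
      (100 : ℝ) ∈ sqdSet (triLattice ∩ hexR 5) ∧
      (∀ d ∈ sqdSet (triLattice ∩ hexR 5), d ≤ 100) ∧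
      34 ≤ Set.ncard {n : ℕ | 0 < n ∧ n < 100 ∧ ∃ a b : ℕ, n = a ^ 2 + a * b + b ^ 2} := by
  refine ⟨?_, ?_, ?_, ?_, ?_⟩
  · rw [key, Set.ncard_image_of_injective _ trif_inj, Set.ncard_coe_finset]
    decide
  · rw [sqdSet_eq, Set.ncard_image_of_injective _ (fun m n h => by exact_mod_cast h),
      Set.ncard_coe_finset]
    decide
  · rw [sqdSet_eq]
    exact ⟨100, Finset.mem_coe.mpr (by decide), by norm_num⟩
  · intro d hd
    rw [sqdSet_eq] at hd
    obtain ⟨n, hn, rfl⟩ := hd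
    have h100 : ∀ n ∈ D, n ≤ 100 := by decide
    have hn' : ((n : ℝ)) ≤ 100 := by exact_mod_cast h100 n (Finset.mem_coe.mp hn)
    simpa using hn'
  · have hsub : (↑T : Set ℕ) ⊆ {n : ℕ | 0 < n ∧ n < 100 ∧ ∃ a b : ℕ, n = a ^ 2 + a * b + b ^ 2} := by
      intro n hn
      obtain ⟨h1, h2, a, _, b, _, h3⟩ := T_props n (Finset.mem_coe.mp hn)
      exact ⟨h1, h2, a, b, h3⟩
    have hfin : {n : ℕ | 0 < n ∧ n < 100 ∧ ∃ a b : ℕ, n = a ^ 2 + a * b + b ^ 2}.Finite :=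
      Set.Finite.subset (Finset.range 100).finite_toSet
        (fun n hn => Finset.mem_range.mpr hn.2.1)
    calc (34 : ℕ) ≤ T.card := by decide
      _ = (↑T : Set ℕ).ncard := (Set.ncard_coe_finset T).symm
      _ ≤ _ := Set.ncard_le_ncard hsub hfin
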